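/- Let Ω₀ ⊂ ℝⁿ be open bounded with barycenter x̄, and let Ω_λ = λΩ₀. Define v_λ(x) = c_λ (x_k − λ x̄_k) where I_k = ∫_{Ω₀} (y_k − x̄_k)² dy > 0 and c_λ² = (λ^{n+2} I_k)^{−1}. Then ∫_{Ω_λ} v_λ = 0, ‖v_λ‖_{L²(Ω_λ)} = 1, and if J is continuous, nonnegative, symmetric with finite second moment m₂(J) = ∫_{ℝⁿ} |z|² J(z) dz, then ⟨L v_λ, v_λ⟩ ≥ −(|Ω₀| m₂(J))/(2 I_k λ²). -/

import Mathlib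

open MeasureTheory Pointwise

set_option maxHeartbeats 1000000

/-- The linear barycentric test function on the scaled domain: zero mean,
unit norm, and the energy lower bound `-(|Ω₀| m₂(J))/(2 I_k λ²)`. -/
theorem stmt_12 (n : ℕ) (Ω₀ : Set (EuclideanSpace ℝ (Fin n)))
    (hΩo : IsOpen Ω₀) (hΩb : Bornology.IsBounded Ω₀) (hΩpos : 0 < volume Ω₀)
    (xbar : EuclideanSpace ℝ (Fin n))
    (hxbar : xbar = ((volume Ω₀).toReal)⁻¹ • ∫ y in Ω₀, y)
    (k : Fin n) (Ik : ℝ) (hIk : Ik = ∫ y in Ω₀, (y k - xbar k) ^ 2)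
    (hIkpos : 0 < Ik)
    (lam : ℝ) (hlam : 0 < lam)
    (clam : ℝ) (hclam : clam ^ 2 = (lam ^ (n + 2) * Ik)⁻¹)
    (v : EuclideanSpace ℝ (Fin n) → ℝ)
    (hv : v = fun x => clam * (x k - lam * xbar k))
    (J : EuclideanSpace ℝ (Fin n) → ℝ)
    (hJc : Continuous J) (hJnn : ∀ z, 0 ≤ J z) (hJsym : ∀ z, J (-z) = J z)
    (hJint : Integrable J)
    (m₂ : ℝ) (hm₂ : m₂ = ∫ z, ‖z‖ ^ 2 * J z)
    (hm₂int : Integrable (fun z => ‖z‖ ^ 2 * J z)) :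
    (∫ x in (lam • Ω₀), v x = 0) ∧
    (∫ x in (lam • Ω₀), (v x) ^ 2 = 1) ∧
    (∫ x in (lam • Ω₀), (∫ y in (lam • Ω₀), J (x - y) * (v y - v x)) * v x
      ≥ -((volume Ω₀).toReal * m₂) / (2 * Ik * lam ^ 2)) := by
  have hΩfin : volume Ω₀ < ⊤ := hΩb.measure_lt_top
  have hVpos : 0 < (volume Ω₀).toReal := ENNReal.toReal_pos hΩpos.ne' hΩfin.ne
  -- change of variables
  have hcv : ∀ f : EuclideanSpace ℝ (Fin n) → ℝ,
      ∫ x in (lam • Ω₀), f x = lam ^ n * ∫ y in Ω₀, f (lam • y) := by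
    intro f
    have h := Measure.setIntegral_comp_smul_of_pos volume f Ω₀ hlam
    rw [finrank_euclideanSpace_fin, smul_eq_mul] at h
    rw [h, ← mul_assoc, mul_inv_cancel₀ (pow_ne_zero _ hlam.ne'), one_mul]
  -- integrability of y ↦ y on Ω₀
  have hid : IntegrableOn (fun y : EuclideanSpace ℝ (Fin n) => y) Ω₀ :=
    (continuous_id.continuousOn.integrableOn_compact hΩb.isCompact_closure).mono_set
      subset_closure
  have hyk : IntegrableOn (fun y : EuclideanSpace ℝ (Fin n) => y k) Ω₀ :=
    (((continuous_apply k).comp (PiLp.continuous_ofLp (p := 2) (β := fun _ : Fin n => ℝ))).continuousOn.integrableOn_compact hΩb.isCompact_closure).mono_set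
      subset_closure
  have hbar : ∫ y in Ω₀, (y k : ℝ) = (volume Ω₀).toReal * xbar k := by
    have h1 : (∫ y in Ω₀, y : EuclideanSpace ℝ (Fin n)) k = ∫ y in Ω₀, y k := by
      have := (EuclideanSpace.proj (𝕜 := ℝ) k).integral_comp_comm hid
      simpa using this.symm
    rw [hxbar]
    simp only [PiLp.smul_apply, smul_eq_mul, h1]
    field_simp
  have hzero : ∫ y in Ω₀, (y k - xbar k) = 0 := by
    rw [integral_sub hyk (integrableOn_const hΩfin.ne)]
    rw [hbar, setIntegral_const, smul_eq_mul]
    rw [measureReal_def]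
    ring
  -- Part 1
  have h1 : ∫ x in (lam • Ω₀), v x = 0 := by
    rw [hcv]
    have hve : ∀ y : EuclideanSpace ℝ (Fin n),
        v (lam • y) = (clam * lam) * (y k - xbar k) := by
      intro y; rw [hv]; simp only [PiLp.smul_apply, smul_eq_mul]; ring
    simp_rw [hve]
    rw [integral_const_mul, hzero, mul_zero, mul_zero]
  -- Part 2
  have h2 : ∫ x in (lam • Ω₀), (v x) ^ 2 = 1 := by
    rw [hcv]
    have hve : ∀ y : EuclideanSpace ℝ (Fin n),
        (v (lam • y)) ^ 2 = (clam ^ 2 * lam ^ 2) * (y k - xbar k) ^ 2 := by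
      intro y; rw [hv]; simp only [PiLp.smul_apply, smul_eq_mul]; ring
    simp_rw [hve]
    rw [integral_const_mul, ← hIk, hclam]
    have hlk : lam ^ (n + 2) = lam ^ n * lam ^ 2 := pow_add lam n 2
    field_simp [hlk]
    ring
  refine ⟨h1, h2, ?_⟩
  -- Part 3
  set s : Set (EuclideanSpace ℝ (Fin n)) := lam • Ω₀ with hsdef
  have hs_open : IsOpen s := hΩo.smul₀ hlam.ne'
  have hs_meas : MeasurableSet s := hs_open.measurableSet
  have hs_b : Bornology.IsBounded s := hΩb.smul₀ lam
  have hs_fin : volume s < ⊤ := hs_b.measure_lt_top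
  have hvols : (volume s).toReal = lam ^ n * (volume Ω₀).toReal := by
    rw [hsdef, Measure.addHaar_smul, finrank_euclideanSpace_fin,
      abs_of_pos (pow_pos hlam n), ENNReal.toReal_mul,
      ENNReal.toReal_ofReal (pow_pos hlam n).le]
  set μ : Measure (EuclideanSpace ℝ (Fin n)) := volume.restrict s with hμdef
  haveI : IsFiniteMeasure μ := ⟨by rw [hμdef, Measure.restrict_apply_univ]; exact hs_fin⟩
  have hvc : Continuous v := by
    rw [hv]; exact continuous_const.mul (((continuous_apply k).comp (PiLp.continuous_ofLp (p := 2) (β := fun _ : Fin n => ℝ))).sub continuous_const)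
  -- integrability helpers
  have key1 : ∀ g : EuclideanSpace ℝ (Fin n) → ℝ, Continuous g → Integrable g μ := by
    intro g hg
    exact (hg.continuousOn.integrableOn_compact hs_b.isCompact_closure).mono_set
      subset_closure
  have key2 : ∀ g : EuclideanSpace ℝ (Fin n) × EuclideanSpace ℝ (Fin n) → ℝ,
      Continuous g → Integrable g (μ.prod μ) := by
    intro g hg
    obtain ⟨C, hC⟩ :=
      (hs_b.isCompact_closure.prod hs_b.isCompact_closure).exists_bound_of_continuousOn
        hg.continuousOn
    refine Integrable.mono' (integrable_const C) hg.aestronglyMeasurable ?_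
    have hmem : ∀ᵐ z ∂(μ.prod μ), z ∈ s ×ˢ s := by
      rw [hμdef, Measure.prod_restrict]
      exact ae_restrict_mem (hs_meas.prod hs_meas)
    filter_upwards [hmem] with z hz
    exact hC z ⟨subset_closure hz.1, subset_closure hz.2⟩
  have hJJ : Continuous fun z : EuclideanSpace ℝ (Fin n) × EuclideanSpace ℝ (Fin n) =>
      J (z.1 - z.2) := hJc.comp (continuous_fst.sub continuous_snd)
  have hHπ : Integrable (fun z : EuclideanSpace ℝ (Fin n) × EuclideanSpace ℝ (Fin n) =>
      J (z.1 - z.2) * ((v z.2) ^ 2 - (v z.1) ^ 2)) (μ.prod μ) :=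
    key2 _ (hJJ.mul (((hvc.comp continuous_snd).pow 2).sub ((hvc.comp continuous_fst).pow 2)))
  have hGπ : Integrable (fun z : EuclideanSpace ℝ (Fin n) × EuclideanSpace ℝ (Fin n) =>
      J (z.1 - z.2) * ((v z.2) - (v z.1)) ^ 2) (μ.prod μ) :=
    key2 _ (hJJ.mul (((hvc.comp continuous_snd).sub (hvc.comp continuous_fst)).pow 2))
  have hG1 : ∀ x, Integrable (fun y => J (x - y) * (v y - v x) ^ 2) μ := fun x =>
    key1 _ ((hJc.comp (continuous_const.sub continuous_id)).mul
      ((hvc.sub continuous_const).pow 2))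
  have hH1 : ∀ x, Integrable (fun y => J (x - y) * ((v y) ^ 2 - (v x) ^ 2)) μ := fun x =>
    key1 _ ((hJc.comp (continuous_const.sub continuous_id)).mul
      ((hvc.pow 2).sub continuous_const))
  -- inner rewrite
  have hinner : ∀ x, (∫ y, J (x - y) * (v y - v x) ∂μ) * v x
      = (1/2) * (∫ y, J (x - y) * ((v y) ^ 2 - (v x) ^ 2) ∂μ)
        - (1/2) * (∫ y, J (x - y) * (v y - v x) ^ 2 ∂μ) := by
    intro x
    rw [← integral_mul_const]
    calc ∫ y, J (x - y) * (v y - v x) * v x ∂μ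
        = ∫ y, ((1/2) * (J (x - y) * ((v y) ^ 2 - (v x) ^ 2))
            - (1/2) * (J (x - y) * (v y - v x) ^ 2)) ∂μ := by
          congr 1; funext y; ring
      _ = (1/2) * (∫ y, J (x - y) * ((v y) ^ 2 - (v x) ^ 2) ∂μ)
            - (1/2) * (∫ y, J (x - y) * (v y - v x) ^ 2 ∂μ) := by
          rw [integral_sub ((hH1 x).const_mul _) ((hG1 x).const_mul _), integral_const_mul,
            integral_const_mul]
  -- the antisymmetric term vanishes
  have hTH : ∫ x, (∫ y, J (x - y) * ((v y) ^ 2 - (v x) ^ 2) ∂μ) ∂μ = 0 := by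
    have hswap := integral_integral_swap
      (f := fun x y => J (x - y) * ((v y) ^ 2 - (v x) ^ 2)) (μ := μ) (ν := μ) hHπ
    have hneg : ∀ a b : EuclideanSpace ℝ (Fin n),
        J (b - a) * ((v a) ^ 2 - (v b) ^ 2) = -(J (a - b) * ((v b) ^ 2 - (v a) ^ 2)) := by
      intro a b
      rw [show b - a = -(a - b) by abel, hJsym]
      ring
    have hkey : (∫ x, (∫ y, J (x - y) * ((v y) ^ 2 - (v x) ^ 2) ∂μ) ∂μ)
        = -(∫ x, (∫ y, J (x - y) * ((v y) ^ 2 - (v x) ^ 2) ∂μ) ∂μ) := by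
      calc (∫ x, (∫ y, J (x - y) * ((v y) ^ 2 - (v x) ^ 2) ∂μ) ∂μ)
          = ∫ a, (∫ b, J (b - a) * ((v a) ^ 2 - (v b) ^ 2) ∂μ) ∂μ := hswap
        _ = ∫ a, (∫ b, -(J (a - b) * ((v b) ^ 2 - (v a) ^ 2)) ∂μ) ∂μ := by
            congr 1; funext a; congr 1; funext b; exact hneg a b
        _ = -(∫ x, (∫ y, J (x - y) * ((v y) ^ 2 - (v x) ^ 2) ∂μ) ∂μ) := by
            simp [integral_neg]
    linarith
  -- bound on the quadratic term
  have hsubint : ∀ x : EuclideanSpace ℝ (Fin n),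
      Integrable (fun y => ‖x - y‖ ^ 2 * J (x - y)) volume := fun x =>
    hm₂int.comp_sub_left x
  have hcoord : ∀ a : EuclideanSpace ℝ (Fin n), (a k) ^ 2 ≤ ‖a‖ ^ 2 := by
    intro a
    rw [EuclideanSpace.norm_eq, Real.sq_sqrt (Finset.sum_nonneg fun i _ => sq_nonneg _)]
    simpa [Real.norm_eq_abs, sq_abs] using
      Finset.single_le_sum (f := fun i => ‖a i‖ ^ 2) (fun i _ => sq_nonneg _)
        (Finset.mem_univ k)
  have hGle : ∀ x y : EuclideanSpace ℝ (Fin n),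
      J (x - y) * (v y - v x) ^ 2 ≤ clam ^ 2 * (‖x - y‖ ^ 2 * J (x - y)) := by
    intro x y
    have hvy : v y - v x = clam * (y k - x k) := by rw [hv]; ring
    have hco : (y k - x k) ^ 2 ≤ ‖x - y‖ ^ 2 := by
      have h := hcoord (y - x)
      rw [PiLp.sub_apply, norm_sub_rev] at h
      exact h
    rw [hvy, mul_pow]
    nlinarith [mul_nonneg (mul_nonneg (sq_nonneg clam) (hJnn (x - y))) (sub_nonneg.2 hco)]
  have hxb : ∀ x, ∫ y, J (x - y) * (v y - v x) ^ 2 ∂μ ≤ clam ^ 2 * m₂ := by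
    intro x
    calc ∫ y, J (x - y) * (v y - v x) ^ 2 ∂μ
        ≤ ∫ y, clam ^ 2 * (‖x - y‖ ^ 2 * J (x - y)) ∂μ :=
          integral_mono (hG1 x) (((hsubint x).restrict).const_mul _) (fun y => hGle x y)
      _ = clam ^ 2 * ∫ y, ‖x - y‖ ^ 2 * J (x - y) ∂μ := integral_const_mul _ _
      _ ≤ clam ^ 2 * ∫ y, ‖x - y‖ ^ 2 * J (x - y) := by
          refine mul_le_mul_of_nonneg_left ?_ (sq_nonneg clam)
          exact setIntegral_le_integral (hsubint x)
            (Filter.Eventually.of_forall fun y =>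
              mul_nonneg (pow_nonneg (norm_nonneg _) 2) (hJnn _))
      _ = clam ^ 2 * m₂ := by
          rw [hm₂]
          congr 1
          exact integral_sub_left_eq_self (fun z => ‖z‖ ^ 2 * J z) volume x
  have hTGle : ∫ x, (∫ y, J (x - y) * (v y - v x) ^ 2 ∂μ) ∂μ
      ≤ clam ^ 2 * m₂ * (volume s).toReal := by
    calc ∫ x, (∫ y, J (x - y) * (v y - v x) ^ 2 ∂μ) ∂μ
        ≤ ∫ _x, clam ^ 2 * m₂ ∂μ :=
          integral_mono hGπ.integral_prod_left (integrable_const _) hxb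
      _ = (volume s).toReal * (clam ^ 2 * m₂) := by
          rw [integral_const, hμdef, measureReal_def, Measure.restrict_apply_univ, smul_eq_mul]
      _ = clam ^ 2 * m₂ * (volume s).toReal := mul_comm _ _
  -- assemble
  have hmainEq : ∫ x, (∫ y, J (x - y) * (v y - v x) ∂μ) * v x ∂μ
      = -(1/2) * (∫ x, (∫ y, J (x - y) * (v y - v x) ^ 2 ∂μ) ∂μ) := by
    calc ∫ x, (∫ y, J (x - y) * (v y - v x) ∂μ) * v x ∂μ
        = ∫ x, ((1/2) * (∫ y, J (x - y) * ((v y) ^ 2 - (v x) ^ 2) ∂μ)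
            - (1/2) * (∫ y, J (x - y) * (v y - v x) ^ 2 ∂μ)) ∂μ := by
          congr 1; funext x; exact hinner x
      _ = (1/2) * (∫ x, (∫ y, J (x - y) * ((v y) ^ 2 - (v x) ^ 2) ∂μ) ∂μ)
            - (1/2) * (∫ x, (∫ y, J (x - y) * (v y - v x) ^ 2 ∂μ) ∂μ) := by
          rw [integral_sub (hHπ.integral_prod_left.const_mul _)
            (hGπ.integral_prod_left.const_mul _), integral_const_mul, integral_const_mul]
      _ = -(1/2) * (∫ x, (∫ y, J (x - y) * (v y - v x) ^ 2 ∂μ) ∂μ) := by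
          rw [hTH]; ring
  have hfinal : -((volume Ω₀).toReal * m₂) / (2 * Ik * lam ^ 2)
      = -(1/2) * (clam ^ 2 * m₂ * (volume s).toReal) := by
    rw [hvols, hclam, pow_add]
    field_simp
  rw [ge_iff_le, hmainEq, hfinal]
  nlinarith [hTGle]
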